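/- Let 0 < R < π, let c = 4 cot²(R/2) log cos(R/2), and define u : (0, R] → ℝ by u(r) = 2(log cos(r/2))² − 2(log cos(R/2))² + Li₂(−tan²(r/2)) − Li₂(−tan²(R/2)) + c·log( cos(r/2)/cos(R/2) ). For a differentiable function f on (0,R) define (Lf)(r) = (1/sin r)·d/dr( sin r · f′(r) ). Then L(Lu)(r) = 1 for all r ∈ (0, R), and u(R) = 0 and u′(R) = 0. -/

import Mathlib

open MeasureTheory Real

/-- The dilogarithm, defined for real `x ≤ 1` by `Li₂(x) = −∫₀ˣ log(1−t)/t dt`. -/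
noncomputable def Li2 (x : ℝ) : ℝ := - ∫ t in (0:ℝ)..x, Real.log (1 - t) / t

/-- The Laplace–Beltrami operator on the unit 2-sphere acting on functions of the
geodesic distance `r` from the north pole: `(Lf)(r) = (1/sin r) (sin r · f′(r))′`. -/
noncomputable def sphLap (f : ℝ → ℝ) (r : ℝ) : ℝ :=
  (1 / Real.sin r) * deriv (fun s => Real.sin s * deriv f s) r

lemma li2_int {x : ℝ} (hx : x < 0) :
    IntervalIntegrable (fun t => Real.log (1 - t) / t) volume 0 x := by
  rw [intervalIntegrable_iff, Set.uIoc_of_ge hx.le]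
  have hmeas : Measurable (fun t : ℝ => Real.log (1 - t) / t) :=
    (Real.measurable_log.comp (measurable_const.sub measurable_id)).div measurable_id
  apply Integrable.mono' (g := fun _ => (1:ℝ))
  · exact integrableOn_const measure_Ioc_lt_top.ne
  · exact hmeas.aestronglyMeasurable.restrict
  · rw [ae_restrict_iff' measurableSet_Ioc]
    refine Filter.Eventually.of_forall (fun t ht => ?_)
    rcases eq_or_lt_of_le ht.2 with h0 | h0
    · simp [h0]
    · have h1 : (0:ℝ) ≤ Real.log (1 - t) := Real.log_nonneg (by linarith)
      have h2 : Real.log (1 - t) ≤ -t := by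
        have := Real.log_le_sub_one_of_pos (x := 1 - t) (by linarith)
        linarith
      rw [Real.norm_eq_abs, abs_div, abs_of_nonneg h1, abs_of_neg h0, div_le_one (by linarith)]
      exact h2

lemma li2_hasDerivAt {x : ℝ} (hx : x < 0) :
    HasDerivAt Li2 (-(Real.log (1 - x) / x)) x := by
  have hcont : ContinuousOn (fun t : ℝ => Real.log (1 - t) / t) (Set.Iio 0) := by
    intro t ht
    have ht' : t < 0 := ht
    have h1 : (1 : ℝ) - t ≠ 0 := by intro h; linarith
    exact (((Real.continuousAt_log h1).comp
      ((continuous_const.sub continuous_id).continuousAt)).continuousWithinAt).div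
      continuousWithinAt_id (ne_of_lt ht')
  have h := intervalIntegral.integral_hasDerivAt_right (li2_int hx)
    (hcont.stronglyMeasurableAtFilter isOpen_Iio x hx)
    ((hcont.continuousAt (isOpen_Iio.mem_nhds hx)))
  exact h.neg

lemma hasDerivAt_U (c k : ℝ) {r : ℝ} (h0 : 0 < r) (hπ : r < π) :
    HasDerivAt (fun s => 2 * (Real.log (Real.cos (s/2)))^2 + Li2 (-(Real.tan (s/2))^2)
        + c * Real.log (Real.cos (s/2)) + k)
      (2 * Real.log (Real.cos (r/2)) / Real.tan (r/2) - c/2 * Real.tan (r/2)) r := by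
  have hC : 0 < Real.cos (r/2) := Real.cos_pos_of_mem_Ioo ⟨by linarith [Real.pi_pos], by linarith⟩
  have hS : 0 < Real.sin (r/2) := Real.sin_pos_of_pos_of_lt_pi (by linarith) (by linarith [Real.pi_pos])
  have hT : 0 < Real.tan (r/2) := by
    rw [Real.tan_eq_sin_div_cos]; positivity
  have hhalf : HasDerivAt (fun s : ℝ => s/2) (1/2) r := (hasDerivAt_id r).div_const 2
  have hcos : HasDerivAt (fun s : ℝ => Real.cos (s/2)) (-Real.sin (r/2) * (1/2)) r :=
    by have := (Real.hasDerivAt_cos (r/2)).comp r hhalf; exact this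
  have hL : HasDerivAt (fun s : ℝ => Real.log (Real.cos (s/2)))
      (-Real.sin (r/2) * (1/2) / Real.cos (r/2)) r := hcos.log hC.ne'
  have htan : HasDerivAt (fun s : ℝ => Real.tan (s/2)) (1 / Real.cos (r/2)^2 * (1/2)) r :=
    by have := (Real.hasDerivAt_tan hC.ne').comp r hhalf; exact this
  have hX : HasDerivAt (fun s : ℝ => -(Real.tan (s/2))^2)
      (-(2 * Real.tan (r/2) ^ 1 * (1 / Real.cos (r/2)^2 * (1/2)))) r := by
    have := (htan.pow 2).neg
    refine this.congr_deriv ?_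
    norm_num
  have hLi : HasDerivAt (fun s : ℝ => Li2 (-(Real.tan (s/2))^2))
      (-(Real.log (1 - -(Real.tan (r/2))^2) / -(Real.tan (r/2))^2)
        * (-(2 * Real.tan (r/2) ^ 1 * (1 / Real.cos (r/2)^2 * (1/2))))) r :=
    (li2_hasDerivAt (by nlinarith)).comp r hX
  have hsq : HasDerivAt (fun s : ℝ => 2 * (Real.log (Real.cos (s/2)))^2)
      (2 * (2 * (Real.log (Real.cos (r/2)))^1 * (-Real.sin (r/2) * (1/2) / Real.cos (r/2)))) r :=
    (hL.pow 2).const_mul 2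
  have hall := ((hsq.add hLi).add (hL.const_mul c)).add_const k
  refine hall.congr_deriv (Eq.symm ?_)
  have hlog1 : Real.log (1 - -(Real.tan (r/2))^2) = -(2 * Real.log (Real.cos (r/2))) := by
    have h1 : 1 - -(Real.tan (r/2))^2 = (Real.cos (r/2))⁻¹^2 := by
      rw [Real.tan_eq_sin_div_cos]
      field_simp
      linarith [Real.sin_sq_add_cos_sq (r/2)]
    rw [h1, Real.log_pow, Real.log_inv]
    ring
  rw [hlog1, Real.tan_eq_sin_div_cos]
  have hpy : Real.sin (r/2)^2 = 1 - Real.cos (r/2)^2 := by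
    nlinarith [Real.sin_sq_add_cos_sq (r/2)]
  field_simp
  linear_combination (4 * Real.log (Real.cos (r/2))) * hpy

lemma sin_eq {r : ℝ} : Real.sin r = 2 * Real.sin (r/2) * Real.cos (r/2) := by
  have := Real.sin_two_mul (r/2)
  rwa [show 2*(r/2) = r by ring] at this

lemma cos_eq {r : ℝ} : Real.cos r = 2 * Real.cos (r/2)^2 - 1 := by
  have := Real.cos_two_mul (r/2)
  rwa [show 2*(r/2) = r by ring] at this

lemma hasDerivAt_psi (c : ℝ) {r : ℝ} (h0 : 0 < r) (hπ : r < π) :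
    HasDerivAt (fun s => Real.sin s *
        (2 * Real.log (Real.cos (s/2)) / Real.tan (s/2) - c/2 * Real.tan (s/2)))
      (Real.sin r * (-1 - 2 * Real.log (Real.cos (r/2)) - c/2)) r := by
  have hC : 0 < Real.cos (r/2) := Real.cos_pos_of_mem_Ioo ⟨by linarith [Real.pi_pos], by linarith⟩
  have hS : 0 < Real.sin (r/2) := Real.sin_pos_of_pos_of_lt_pi (by linarith) (by linarith [Real.pi_pos])
  have hT : 0 < Real.tan (r/2) := by
    rw [Real.tan_eq_sin_div_cos]; positivity
  have hhalf : HasDerivAt (fun s : ℝ => s/2) (1/2) r := (hasDerivAt_id r).div_const 2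
  have hcos : HasDerivAt (fun s : ℝ => Real.cos (s/2)) (-Real.sin (r/2) * (1/2)) r :=
    by have := (Real.hasDerivAt_cos (r/2)).comp r hhalf; exact this
  have hL : HasDerivAt (fun s : ℝ => Real.log (Real.cos (s/2)))
      (-Real.sin (r/2) * (1/2) / Real.cos (r/2)) r := hcos.log hC.ne'
  have htan : HasDerivAt (fun s : ℝ => Real.tan (s/2)) (1 / Real.cos (r/2)^2 * (1/2)) r :=
    by have := (Real.hasDerivAt_tan hC.ne').comp r hhalf; exact this
  have hphi := ((hL.const_mul 2).div htan hT.ne').sub (htan.const_mul (c/2))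
  have hall := (Real.hasDerivAt_sin r).mul hphi
  refine hall.congr_deriv (Eq.symm ?_)
  simp only [Pi.sub_apply, Pi.div_apply]
  rw [Real.tan_eq_sin_div_cos, sin_eq (r := r), cos_eq (r := r)]
  have hpy : Real.sin (r/2)^2 = 1 - Real.cos (r/2)^2 := by
    nlinarith [Real.sin_sq_add_cos_sq (r/2)]
  field_simp
  linear_combination (-8 * Real.log (Real.cos (r/2)) * Real.cos (r/2)^2) * hpy

lemma hasDerivAt_sintan {r : ℝ} (h0 : 0 < r) (hπ : r < π) :
    HasDerivAt (fun s => Real.sin s * Real.tan (s/2)) (Real.sin r) r := by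
  have hC : 0 < Real.cos (r/2) := Real.cos_pos_of_mem_Ioo ⟨by linarith [Real.pi_pos], by linarith⟩
  have hhalf : HasDerivAt (fun s : ℝ => s/2) (1/2) r := (hasDerivAt_id r).div_const 2
  have htan : HasDerivAt (fun s : ℝ => Real.tan (s/2)) (1 / Real.cos (r/2)^2 * (1/2)) r :=
    by have := (Real.hasDerivAt_tan hC.ne').comp r hhalf; exact this
  have hall := (Real.hasDerivAt_sin r).mul htan
  refine hall.congr_deriv (Eq.symm ?_)
  rw [Real.tan_eq_sin_div_cos, sin_eq (r := r), cos_eq (r := r)]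
  have hpy : Real.sin (r/2)^2 = 1 - Real.cos (r/2)^2 := by
    nlinarith [Real.sin_sq_add_cos_sq (r/2)]
  field_simp
  ring_nf

/-- The explicit radial function `u` on the spherical cap of geodesic radius `R < π`
solves the clamped-plate equation `Δ²u = 1` on `(0,R)` with clamped boundary
conditions `u(R) = 0` and `u′(R) = 0`. -/
theorem stmt_3 (R : ℝ) (hR0 : 0 < R) (hRπ : R < π)
    (c : ℝ) (hc : c = 4 * (Real.cos (R/2) / Real.sin (R/2))^2 * Real.log (Real.cos (R/2)))
    (u : ℝ → ℝ)
    (hu : ∀ r, u r = 2 * (Real.log (Real.cos (r/2)))^2 - 2 * (Real.log (Real.cos (R/2)))^2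
        + Li2 (-(Real.tan (r/2))^2) - Li2 (-(Real.tan (R/2))^2)
        + c * Real.log (Real.cos (r/2) / Real.cos (R/2))) :
    (∀ r ∈ Set.Ioo (0:ℝ) R, sphLap (sphLap u) r = 1) ∧ u R = 0 ∧ deriv u R = 0 := by
  have hCR : 0 < Real.cos (R/2) :=
    Real.cos_pos_of_mem_Ioo ⟨by linarith [Real.pi_pos], by linarith⟩
  have hSR : 0 < Real.sin (R/2) :=
    Real.sin_pos_of_pos_of_lt_pi (by linarith) (by linarith [Real.pi_pos])
  set k : ℝ := -2 * (Real.log (Real.cos (R/2)))^2 - Li2 (-(Real.tan (R/2))^2)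
      - c * Real.log (Real.cos (R/2)) with hk
  set φ : ℝ → ℝ := fun s =>
      2 * Real.log (Real.cos (s/2)) / Real.tan (s/2) - c/2 * Real.tan (s/2) with hφ
  set v : ℝ → ℝ := fun s => -1 - 2 * Real.log (Real.cos (s/2)) - c/2 with hv
  -- u has derivative φ on (0,π)
  have hU : ∀ r ∈ Set.Ioo (0:ℝ) π, HasDerivAt u (φ r) r := by
    intro r hr
    have hev : u =ᶠ[nhds r] (fun s => 2 * (Real.log (Real.cos (s/2)))^2
        + Li2 (-(Real.tan (s/2))^2) + c * Real.log (Real.cos (s/2)) + k) := by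
      filter_upwards [isOpen_Ioo.mem_nhds hr] with s hs
      have hCs : 0 < Real.cos (s/2) :=
        Real.cos_pos_of_mem_Ioo ⟨by linarith [Real.pi_pos, hs.1], by linarith [hs.2]⟩
      rw [hu s, Real.log_div hCs.ne' hCR.ne', hk]
      ring
    exact (hasDerivAt_U c k hr.1 hr.2).congr_of_eventuallyEq hev
  -- sphLap u = v on (0,π)
  have hsph : ∀ x ∈ Set.Ioo (0:ℝ) π, sphLap u x = v x := by
    intro x hx
    have hsx : 0 < Real.sin x := Real.sin_pos_of_pos_of_lt_pi hx.1 hx.2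
    have hev : (fun s => Real.sin s * deriv u s) =ᶠ[nhds x] (fun s => Real.sin s * φ s) := by
      filter_upwards [isOpen_Ioo.mem_nhds hx] with s hs
      rw [(hU s hs).deriv]
    rw [sphLap, hev.deriv_eq, (hasDerivAt_psi c hx.1 hx.2).deriv, one_div,
      inv_mul_cancel_left₀ hsx.ne']
  -- deriv v = tan(s/2) on (0,π)
  have hvd : ∀ x ∈ Set.Ioo (0:ℝ) π, HasDerivAt v (Real.tan (x/2)) x := by
    intro x hx
    have hCx : 0 < Real.cos (x/2) :=
      Real.cos_pos_of_mem_Ioo ⟨by linarith [Real.pi_pos, hx.1], by linarith [hx.2]⟩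
    have hhalf : HasDerivAt (fun s : ℝ => s/2) (1/2) x := (hasDerivAt_id x).div_const 2
    have hcos : HasDerivAt (fun s : ℝ => Real.cos (s/2)) (-Real.sin (x/2) * (1/2)) x :=
      by have := (Real.hasDerivAt_cos (x/2)).comp x hhalf; exact this
    have hL : HasDerivAt (fun s : ℝ => Real.log (Real.cos (s/2)))
        (-Real.sin (x/2) * (1/2) / Real.cos (x/2)) x := hcos.log hCx.ne'
    have h := ((hL.const_mul 2).neg.const_add (-1)).sub_const (c/2)
    have hveq : v = fun s : ℝ => -1 + -(2 * Real.log (Real.cos (s/2))) - c/2 := by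
      funext s; rw [hv]; ring
    rw [hveq]
    refine h.congr_deriv (Eq.symm ?_)
    rw [Real.tan_eq_sin_div_cos]
    field_simp
  constructor
  · intro r hr
    have hrπ : r ∈ Set.Ioo (0:ℝ) π := ⟨hr.1, by linarith [hr.2]⟩
    have hsr : 0 < Real.sin r := Real.sin_pos_of_pos_of_lt_pi hrπ.1 hrπ.2
    have hev1 : sphLap u =ᶠ[nhds r] v := by
      filter_upwards [isOpen_Ioo.mem_nhds hrπ] with s hs
      exact hsph s hs
    have hev2 : (fun s => Real.sin s * deriv (sphLap u) s)
        =ᶠ[nhds r] (fun s => Real.sin s * Real.tan (s/2)) := by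
      filter_upwards [hev1.deriv, isOpen_Ioo.mem_nhds hrπ] with s h1 h2
      rw [h1, (hvd s h2).deriv]
    rw [sphLap, hev2.deriv_eq, (hasDerivAt_sintan hrπ.1 hrπ.2).deriv, one_div,
      inv_mul_cancel₀ hsr.ne']
  constructor
  · rw [hu R, div_self hCR.ne']
    simp
  · have h := (hU R ⟨hR0, hRπ⟩).deriv
    rw [h, hφ]
    simp only
    rw [hc, Real.tan_eq_sin_div_cos]
    field_simp
    ring
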